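/- Let $p \geq 1$. For a profile $m \in \mathbb{Z}^{(\mathbb{N}^*)}$ (a finitely supported sequence of integers indexed by positive integers) define $S(m) = \sum_{k \geq 1} k\, m_k$ and $m^{[p]} = \big(\sum_{-p < k < p} (p - |k|)\, m_{pa+k}\big)_{a \geq 1}$ (with $m_j = 0$ for $j \leq 0$). Then $S(m^{[p]}) = S(m)$ for every profile $m$. -/

import Mathlib

/-- The size `S(m) = ∑ k, k mₖ` of a finitely supported integer sequence. -/
def profileSize (m : ℕ →₀ ℤ) : ℤ := m.sum fun k v => (k : ℤ) * v

/-- The `a`-th entry (`a ≥ 1`) of `m^[p]`: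
`∑_{-p < j < p} (p - |j|) m_{p a + j}` (with `m_i = 0` for `i ≤ 0`). -/
noncomputable def profilePow (m : ℕ →₀ ℤ) (p : ℕ) (a : ℕ) : ℤ :=
  ∑ j ∈ Finset.Ioo (-(p : ℤ)) (p : ℤ), ((p : ℤ) - |j|) * m ((p * a + j).toNat)

lemma profilePow_add (m₁ m₂ : ℕ →₀ ℤ) (p a : ℕ) :
    profilePow (m₁ + m₂) p a = profilePow m₁ p a + profilePow m₂ p a := by
  unfold profilePow
  rw [← Finset.sum_add_distrib]
  refine Finset.sum_congr rfl fun j _ => ?_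
  simp [mul_add]

lemma profileSize_add (m₁ m₂ : ℕ →₀ ℤ) :
    profileSize (m₁ + m₂) = profileSize m₁ + profileSize m₂ := by
  unfold profileSize
  rw [Finsupp.sum_add_index'] <;> intros <;> ring

lemma profilePow_single (p k : ℕ) (hk : k ≠ 0) (c : ℤ) (a : ℕ) :
    profilePow (Finsupp.single k c) p a =
      if (k : ℤ) - p * a ∈ Finset.Ioo (-(p : ℤ)) (p : ℤ)
        then ((p : ℤ) - |(k : ℤ) - p * a|) * c else 0 := by
  unfold profilePow
  have h : ∀ j ∈ Finset.Ioo (-(p : ℤ)) (p : ℤ),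
      ((p : ℤ) - |j|) * Finsupp.single k c ((↑p * ↑a + j).toNat)
        = if j = (k : ℤ) - p * a then ((p : ℤ) - |j|) * c else 0 := by
    intro j _
    rw [Finsupp.single_apply]
    have : (k = ((p : ℤ) * ↑a + j).toNat) ↔ (j = (k : ℤ) - p * a) := by omega
    by_cases hj : j = (k : ℤ) - p * a
    · rw [if_pos hj, if_pos (this.mpr hj)]
    · rw [if_neg hj, if_neg (fun h => hj (this.mp h)), mul_zero]
  rw [Finset.sum_congr rfl h, Finset.sum_ite_eq']

lemma exists_M_single (p k : ℕ) (hp : 1 ≤ p) (hk : 1 ≤ k) (c : ℤ) :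
    ∃ M : ℕ →₀ ℤ, M 0 = 0 ∧
      (∀ a : ℕ, 1 ≤ a → M a = profilePow (Finsupp.single k c) p a) ∧
      profileSize M = (k : ℤ) * c := by
  obtain ⟨q, r, hrp, hk'⟩ : ∃ q r, r < p ∧ k = p * q + r :=
    ⟨k / p, k % p, Nat.mod_lt _ hp, (Nat.div_add_mod k p).symm⟩
  refine ⟨(if q = 0 then 0 else Finsupp.single q (c * ((p : ℤ) - r)))
      + Finsupp.single (q + 1) (c * r), ?_, ?_, ?_⟩
  · by_cases h : q = 0 <;> simp [h, Finsupp.single_apply]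
  · intro a ha
    rw [profilePow_single p k (by omega) c a]
    simp only [Finset.mem_Ioo]
    have hM : ((if q = 0 then 0 else Finsupp.single q (c * ((p : ℤ) - r)))
        + Finsupp.single (q + 1) (c * r)) a
        = (if q = a then c * ((p : ℤ) - r) else 0)
          + (if q + 1 = a then c * (r : ℤ) else 0) := by
      rw [Finsupp.add_apply]
      congr 1
      · split_ifs with hq ha1 ha2
        · exact absurd (ha1.symm.trans hq) (by omega)
        · rfl
        · simp [Finsupp.single_apply, ha2]
        · simp [Finsupp.single_apply, ha2]
      · exact Finsupp.single_apply
    rw [hM]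
    by_cases h1 : q = a
    · subst h1
      have e : (k : ℤ) - p * q = r := by push_cast [hk']; ring
      rw [if_pos rfl, if_neg (by omega : ¬ q + 1 = q), e,
        abs_of_nonneg (by positivity : (0 : ℤ) ≤ (r : ℤ)),
        if_pos (by constructor <;> omega)]
      ring
    · by_cases h2 : q + 1 = a
      · subst h2
        have e : (k : ℤ) - p * (q + 1 : ℕ) = (r : ℤ) - p := by push_cast [hk']; ring
        rw [if_neg h1, if_pos rfl, e, abs_of_nonpos (by omega : (r : ℤ) - p ≤ 0)]
        by_cases hr0 : r = 0
        · subst hr0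
          rw [if_neg (by push_cast; omega)]
          simp
        · rw [if_pos (by constructor <;> omega)]
          ring
      · rw [if_neg h1, if_neg h2, if_neg ?_]
        · simp
        rintro ⟨hlo, hhi⟩
        have hkz : (k : ℤ) = p * q + r := by exact_mod_cast hk'
        rw [hkz] at hlo hhi
        have hp' : (0 : ℤ) ≤ p := by positivity
        rcases Nat.lt_or_ge a q with hlt | hge
        · have : (p : ℤ) * (a + 1) ≤ p * q :=
            mul_le_mul_of_nonneg_left (by exact_mod_cast hlt) hp'
          have hr0 : (0 : ℤ) ≤ r := by positivity
          nlinarith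
        · have hgt : q + 2 ≤ a := by omega
          have : (p : ℤ) * (q + 2) ≤ p * a :=
            mul_le_mul_of_nonneg_left (by exact_mod_cast hgt) hp'
          have hrp' : (r : ℤ) < p := by exact_mod_cast hrp
          nlinarith
  · rw [profileSize_add]
    have hs : ∀ (n : ℕ) (v : ℤ), profileSize (Finsupp.single n v) = n * v := by
      intro n v
      unfold profileSize
      rw [Finsupp.sum_single_index]; ring
    by_cases h : q = 0
    · subst h
      have hrk : r = k := by omega
      subst hrk
      rw [if_pos rfl, hs]
      have h0 : profileSize 0 = 0 := by unfold profileSize; simp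
      rw [h0]
      push_cast
      ring
    · rw [if_neg h, hs, hs]
      have hkz : (k : ℤ) = p * q + r := by exact_mod_cast hk'
      rw [hkz]
      push_cast
      ring

/-- `S(m^[p]) = S(m)` for every profile `m` (a finitely supported sequence of integers
indexed by positive integers, i.e. with `m 0 = 0`). -/
theorem stmt14 (p : ℕ) (hp : 1 ≤ p) (m : ℕ →₀ ℤ) (hm0 : m 0 = 0) :
    ∃ M : ℕ →₀ ℤ, M 0 = 0 ∧ (∀ a : ℕ, 1 ≤ a → M a = profilePow m p a) ∧
      profileSize M = profileSize m := by
  induction m using Finsupp.induction with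
  | zero =>
      refine ⟨0, rfl, fun a _ => ?_, ?_⟩
      · unfold profilePow; simp
      · rfl
  | single_add k c f hkf hc ih =>
      have hk : k ≠ 0 := by
        intro h
        subst h
        have hf0 : f 0 = 0 := Finsupp.notMem_support_iff.mp hkf
        simp [hf0] at hm0
        exact hc hm0
      have hf0 : f 0 = 0 := by
        have := hm0
        simp [Finsupp.single_apply, hk] at this
        exact this
      obtain ⟨Mf, hMf0, hMfa, hMfS⟩ := ih hf0
      obtain ⟨Ms, hMs0, hMsa, hMsS⟩ := exists_M_single p k hp (by omega) c
      refine ⟨Ms + Mf, by simp [hMs0, hMf0], fun a ha => ?_, ?_⟩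
      · rw [profilePow_add]
        simp [hMsa a ha, hMfa a ha]
      · rw [profileSize_add, profileSize_add, hMsS, hMfS]
        congr 1
        unfold profileSize
        rw [Finsupp.sum_single_index]
        ring
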